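/- Let 0 < β < 1, θ > 0, A > 0. With normalization z = z(t) = (A/t)^{1/β}, the function Ψ(t,λ) = (1 + (1 - e^{-λz})^β · t/A)^{-θA} converges, as t → ∞, to (1/(1+λ^β))^{θA} for every λ > 0. -/

import Mathlib

open Real Filter

theorem linnik_limit_gamma_eq_beta
    (β θ A : ℝ) (hβ : 0 < β) (hβ1 : β < 1) (hθ : 0 < θ) (hA : 0 < A) :
    ∀ lam : ℝ, 0 < lam →
      Tendsto (fun t : ℝ =>
          (1 + (1 - Real.exp (-lam * (A / t) ^ (1 / β))) ^ β * t / A) ^ (-(θ * A)))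
        atTop (nhds ((1 / (1 + lam ^ β)) ^ (θ * A))) := by
  intro lam hlam
  set z : ℝ → ℝ := fun t => (A / t) ^ (1 / β) with hzdef
  have hβne : (1 : ℝ) / β ≠ 0 := one_div_ne_zero (ne_of_gt hβ)
  have hz0 : Tendsto z atTop (nhds 0) := by
    have h1 : Tendsto (fun t : ℝ => A / t) atTop (nhds 0) :=
      tendsto_const_nhds.div_atTop tendsto_id
    have h2 := h1.rpow_const (p := 1 / β) (Or.inr (le_of_lt (by positivity)))
    simpa [hzdef, Real.zero_rpow (inv_ne_zero (ne_of_gt hβ)), one_div] using h2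
  have hzpos : ∀ᶠ t in atTop, 0 < z t := by
    filter_upwards [eventually_gt_atTop 0] with t ht
    exact Real.rpow_pos_of_pos (div_pos hA ht) _
  -- derivative of u ↦ 1 - exp(-lam*u) at 0 is lam
  have hderiv : HasDerivAt (fun u : ℝ => 1 - Real.exp (-lam * u)) lam 0 := by
    have h1 : HasDerivAt (fun u : ℝ => Real.exp (-lam * u)) (-lam) 0 := by
      have := (Real.hasDerivAt_exp ((-lam) * 0)).comp 0 ((hasDerivAt_id 0).const_mul (-lam))
      simpa [Function.comp_def, neg_mul] using this
    simpa using h1.const_sub (1 : ℝ)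
  have hslope : Tendsto (fun u : ℝ => (1 - Real.exp (-lam * u)) / u) (nhdsWithin 0 (Set.Ioi 0))
      (nhds lam) := by
    have h1 := hasDerivAt_iff_tendsto_slope.mp hderiv
    have h2 := h1.mono_left (nhdsWithin_mono 0 (fun x hx => ne_of_gt hx))
    refine h2.congr (fun u => ?_)
    simp [slope_def_field, div_eq_inv_mul]
  have hzin : Tendsto z atTop (nhdsWithin 0 (Set.Ioi 0)) :=
    tendsto_nhdsWithin_iff.mpr ⟨hz0, hzpos⟩
  have hg : Tendsto (fun t => (1 - Real.exp (-lam * z t)) / z t) atTop (nhds lam) :=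
    hslope.comp hzin
  -- continuity of x ↦ (1 + x^β)^(-(θ*A)) at lam
  have hc1 : ContinuousAt (fun x : ℝ => x ^ β) lam :=
    Real.continuousAt_rpow_const lam β (Or.inl (ne_of_gt hlam))
  have hpos : (0 : ℝ) < 1 + lam ^ β := by positivity
  have h3 : ContinuousAt (fun y : ℝ => y ^ (-(θ * A))) (1 + lam ^ β) :=
    Real.continuousAt_rpow_const _ _ (Or.inl (ne_of_gt hpos))
  have hlim : Tendsto (fun t => (1 + ((1 - Real.exp (-lam * z t)) / z t) ^ β) ^ (-(θ * A)))
      atTop (nhds ((1 + lam ^ β) ^ (-(θ * A)))) :=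
    h3.tendsto.comp (tendsto_const_nhds.add (hc1.tendsto.comp hg))
  have hval : (1 + lam ^ β) ^ (-(θ * A)) = ((1 : ℝ) / (1 + lam ^ β)) ^ (θ * A) := by
    rw [one_div, ← Real.rpow_neg_one, ← Real.rpow_mul (le_of_lt hpos)]
    norm_num
  rw [← hval]
  refine hlim.congr' ?_
  filter_upwards [eventually_gt_atTop 0] with t ht
  have hzt : 0 < z t := Real.rpow_pos_of_pos (div_pos hA ht) _
  have hexp : Real.exp (-lam * z t) ≤ 1 := by
    apply Real.exp_le_one_iff.mpr
    have : 0 ≤ lam * z t := le_of_lt (mul_pos hlam hzt)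
    linarith
  have hnum : 0 ≤ 1 - Real.exp (-lam * z t) := by linarith
  have hzb : z t ^ β = A / t := by
    rw [hzdef]
    rw [← Real.rpow_mul (le_of_lt (div_pos hA ht))]
    rw [one_div_mul_cancel (ne_of_gt hβ), Real.rpow_one]
  have : ((1 - Real.exp (-lam * z t)) / z t) ^ β
      = (1 - Real.exp (-lam * z t)) ^ β * t / A := by
    rw [Real.div_rpow hnum (le_of_lt hzt), hzb, div_div_eq_mul_div]
  rw [this]
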